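/- Let F be a field, A_n = F[x₁,…,x_n, y₁,…,y_n], α_{ij} = x_i y_j − x_j y_i, S_n = F[α_{ij} : i<j] ⊆ A_n, and v_i = (x_i, y_i) ∈ A_n². Then S_n·V = Σ_{i=1}^n S_{n,i}·v_i, where V = Σ F·v_i, S_{n,m} = F[α_{ij} : j ≥ m], and S·v means the set of products (s x_i, s y_i) for s in S. That is, every element s·v_k with s ∈ S_n can be rewritten as a sum Σ_i s_i v_i with s_i ∈ S_{n,i}. -/
import Mathlib


open MvPolynomial

/-- S_n·V = Σᵢ S_{n,i}·v_i: every product s·v_k with s ∈ S_n can be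
rewritten as Σᵢ sᵢ·vᵢ with sᵢ ∈ S_{n,i} = F[α_{ij} : j ≥ i-th level]. -/
theorem SnV_decomposition (F : Type*) [Field F] (n : ℕ)
    (α : Fin n → Fin n → MvPolynomial (Fin n ⊕ Fin n) F)
    (hα : ∀ i j, α i j = X (Sum.inl i) * X (Sum.inr j) - X (Sum.inl j) * X (Sum.inr i))
    (v : Fin n → MvPolynomial (Fin n ⊕ Fin n) F × MvPolynomial (Fin n ⊕ Fin n) F)
    (hv : ∀ i, v i = (X (Sum.inl i), X (Sum.inr i)))
    (act : MvPolynomial (Fin n ⊕ Fin n) F →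
      MvPolynomial (Fin n ⊕ Fin n) F × MvPolynomial (Fin n ⊕ Fin n) F →
      MvPolynomial (Fin n ⊕ Fin n) F × MvPolynomial (Fin n ⊕ Fin n) F)
    (hact : ∀ a p, act a p = (a * p.1, a * p.2))
    -- S_n and S_{n,m}
    (Sn : Subalgebra F (MvPolynomial (Fin n ⊕ Fin n) F))
    (hSn : Sn = Algebra.adjoin F {p | ∃ i j : Fin n, i < j ∧ p = α i j})
    (Snm : Fin n → Subalgebra F (MvPolynomial (Fin n ⊕ Fin n) F))
    (hSnm : ∀ m, Snm m = Algebra.adjoin F {p | ∃ i j : Fin n, i < j ∧ m ≤ j ∧ p = α i j}) :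
    ∀ s ∈ Sn, ∀ k : Fin n, ∃ t : Fin n → MvPolynomial (Fin n ⊕ Fin n) F,
      (∀ i, t i ∈ Snm i) ∧ act s (v k) = ∑ i : Fin n, act (t i) (v i) := by
  classical
  have hact_smul : ∀ a p, act a p = a • p := by
    intro a p
    rw [hact]
    ext <;> simp [smul_eq_mul]
  -- monotonicity of the subalgebras Snm
  have hmono : ∀ i j : Fin n, i ≤ j → Snm j ≤ Snm i := by
    intro i j hij
    rw [hSnm, hSnm]
    apply Algebra.adjoin_mono
    rintro p ⟨a, b, hab, hjb, rfl⟩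
    exact ⟨a, b, hab, le_trans hij hjb, rfl⟩
  -- generators
  have hgen : ∀ (m p q : Fin n), p < q → m ≤ q → α p q ∈ Snm m := by
    intro m p q hpq hmq
    rw [hSnm]
    exact Algebra.subset_adjoin ⟨p, q, hpq, hmq, rfl⟩
  -- the predicate of being expressible
  set P : MvPolynomial (Fin n ⊕ Fin n) F × MvPolynomial (Fin n ⊕ Fin n) F → Prop :=
    fun p => ∃ t : Fin n → MvPolynomial (Fin n ⊕ Fin n) F,
      (∀ i, t i ∈ Snm i) ∧ p = ∑ i : Fin n, act (t i) (v i) with hP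
  have P_add : ∀ p q, P p → P q → P (p + q) := by
    rintro p q ⟨t, ht, rfl⟩ ⟨u, hu, rfl⟩
    refine ⟨t + u, fun i => add_mem (ht i) (hu i), ?_⟩
    rw [← Finset.sum_add_distrib]
    refine Finset.sum_congr rfl fun i _ => ?_
    simp [hact_smul, add_smul]
  have P_zero : P 0 := by
    refine ⟨0, fun i => zero_mem _, ?_⟩
    simp [hact_smul]
  have P_sum : ∀ (f : Fin n → MvPolynomial (Fin n ⊕ Fin n) F × MvPolynomial (Fin n ⊕ Fin n) F),
      (∀ j, P (f j)) → P (∑ j : Fin n, f j) := by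
    intro f hf
    exact Finset.sum_induction f P P_add P_zero fun j _ => hf j
  have P_single : ∀ (i : Fin n) (u : MvPolynomial (Fin n ⊕ Fin n) F),
      u ∈ Snm i → P (act u (v i)) := by
    intro i u hu
    refine ⟨fun j => if j = i then u else 0, fun j => ?_, ?_⟩
    · by_cases h : j = i
      · subst h; simpa using hu
      · simpa [h] using zero_mem (Snm j)
    · have h : ∀ j ∈ Finset.univ, act (if j = i then u else 0) (v j)
          = if j = i then act u (v i) else 0 := by
        intro j _
        by_cases h : j = i
        · subst h; simp
        · simp [h, hact_smul]
      rw [Finset.sum_congr rfl h, Finset.sum_ite_eq' Finset.univ i]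
      simp
  -- key claim
  have key : ∀ a ∈ Algebra.adjoin F {p | ∃ i j : Fin n, i < j ∧ p = α i j},
      ∀ i : Fin n, ∀ t ∈ Snm i, P (act (a * t) (v i)) := by
    intro a ha
    induction ha using Algebra.adjoin_induction with
    | mem x hx =>
      obtain ⟨p, q, hpq, rfl⟩ := hx
      intro i t ht
      rcases le_or_gt i q with hle | hlt
      · exact P_single i _ (mul_mem (hgen i p q hpq hle) ht)
      · have hpi : p < i := hpq.trans hlt
        have identity : act (α p q * t) (v i)
            = act (t * α p i) (v q) + act (-(t * α q i)) (v p) := by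
          simp only [hα, hv, hact, Prod.mk_add_mk, Prod.mk.injEq]
          constructor <;> ring
        rw [identity]
        refine P_add _ _ ?_ ?_
        · exact P_single q _ (mul_mem (hmono q i hlt.le ht) (hgen q p i hpi hlt.le))
        · exact P_single p _ (neg_mem (mul_mem (hmono p i hpi.le ht) (hgen p q i hlt hpi.le)))
    | algebraMap r =>
      intro i t ht
      exact P_single i _ (mul_mem (Subalgebra.algebraMap_mem _ r) ht)
    | add x y hx hy ihx ihy =>
      intro i t ht
      have h : act ((x + y) * t) (v i) = act (x * t) (v i) + act (y * t) (v i) := by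
        rw [hact_smul, hact_smul, hact_smul, add_mul, add_smul]
      rw [h]
      exact P_add _ _ (ihx i t ht) (ihy i t ht)
    | mul x y hx hy ihx ihy =>
      intro i t ht
      obtain ⟨u, hu, heq⟩ := ihy i t ht
      have h : act (x * y * t) (v i) = ∑ j : Fin n, act (x * u j) (v j) := by
        have h1 : act (x * y * t) (v i) = x • act (y * t) (v i) := by
          rw [hact_smul, hact_smul, mul_assoc, mul_smul]
        rw [h1, heq, Finset.smul_sum]
        refine Finset.sum_congr rfl fun j _ => ?_
        rw [hact_smul, hact_smul, mul_smul]
      rw [h]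
      exact P_sum _ fun j => ihx j (u j) (hu j)
  intro s hs k
  rw [hSn] at hs
  have := key s hs k 1 (one_mem _)
  rw [mul_one] at this
  exact this
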